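/- Let q > 1 real, D ≥ 3 an integer, e ≥ 0 real. For 1 ≤ i ≤ D-1 define Y_i = (-1)^i q^{i(D+e-i)} (q^{1-D};q)_i (1+q^D+q^{D+e-i}-q^{D-i}) / ((q;q)_i (-q^{e-i};q)_D (1+q^{D+e-2i})), Y_{-i} = (-1)^{i-1} q^{i(D+e-i-2)+D+e} (q^{1-D};q)_{i-1} (1+q^D+q^{i-e}-q^i) / ((q;q)_{i-1} (-q^{e-i+1};q)_D (1+q^{D+e-2i})), and Z_i = (-1)^i q^{i(D+e-i-1)+D} (q^{1-D};q)_i / ((q;q)_{i-1} (-q^{e-i+1};q)_{D-1} (1+q^{D+e-2i})). Also let M_i = (-1)^i q^{i(D+e-i+1)} (q^{-D};q)_i (1+q^{D+e-2i}) / ((q;q)_i (-q^{e-i};q)_{D+1}). Then Y_i + 2Z_i + Y_{-i} = M_i for all 1 ≤ i ≤ D-1. -/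
import Mathlib


set_option maxHeartbeats 1600000 in
open Finset in
/-- the identity `Y_i + 2Z_i + Y_{-i} = M_i`, encoding
`‖y_i‖² + 2⟨y_i, y_{-i}⟩ + ‖y_{-i}‖² = ‖E_i x̂‖²`. -/
theorem stmt_19 (q : ℝ) (hq : 1 < q) (D : ℕ) (hD : 3 ≤ D) (e : ℝ) (he : 0 ≤ e)
    (Y Ym Z M : ℕ → ℝ)
    (hY : ∀ i, Y i = (-1 : ℝ) ^ i * q ^ ((i : ℝ) * ((D : ℝ) + e - (i : ℝ))) *
      (∏ k ∈ range i, (1 - q ^ (1 - (D : ℝ) + (k : ℝ)))) *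
      (1 + q ^ (D : ℝ) + q ^ ((D : ℝ) + e - (i : ℝ)) - q ^ ((D : ℝ) - (i : ℝ))) /
      ((∏ k ∈ range i, (1 - q ^ (k + 1))) *
        (∏ k ∈ range D, (1 + q ^ (e - (i : ℝ) + (k : ℝ)))) *
        (1 + q ^ ((D : ℝ) + e - 2 * (i : ℝ)))))
    (hYm : ∀ i, Ym i = (-1 : ℝ) ^ (i - 1) *
      q ^ ((i : ℝ) * ((D : ℝ) + e - (i : ℝ) - 2) + (D : ℝ) + e) *
      (∏ k ∈ range (i - 1), (1 - q ^ (1 - (D : ℝ) + (k : ℝ)))) *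
      (1 + q ^ (D : ℝ) + q ^ ((i : ℝ) - e) - q ^ (i : ℝ)) /
      ((∏ k ∈ range (i - 1), (1 - q ^ (k + 1))) *
        (∏ k ∈ range D, (1 + q ^ (e - (i : ℝ) + 1 + (k : ℝ)))) *
        (1 + q ^ ((D : ℝ) + e - 2 * (i : ℝ)))))
    (hZ : ∀ i, Z i = (-1 : ℝ) ^ i *
      q ^ ((i : ℝ) * ((D : ℝ) + e - (i : ℝ) - 1) + (D : ℝ)) *
      (∏ k ∈ range i, (1 - q ^ (1 - (D : ℝ) + (k : ℝ)))) /
      ((∏ k ∈ range (i - 1), (1 - q ^ (k + 1))) *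
        (∏ k ∈ range (D - 1), (1 + q ^ (e - (i : ℝ) + 1 + (k : ℝ)))) *
        (1 + q ^ ((D : ℝ) + e - 2 * (i : ℝ)))))
    (hM : ∀ i, M i = (-1 : ℝ) ^ i * q ^ ((i : ℝ) * ((D : ℝ) + e - (i : ℝ) + 1)) *
      (∏ k ∈ range i, (1 - q ^ ((k : ℝ) - (D : ℝ)))) * (1 + q ^ ((D : ℝ) + e - 2 * (i : ℝ))) /
      ((∏ k ∈ range i, (1 - q ^ (k + 1))) *
        (∏ k ∈ range (D + 1), (1 + q ^ (e - (i : ℝ) + (k : ℝ)))))) :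
    ∀ i, 1 ≤ i → i ≤ D - 1 → Y i + 2 * Z i + Ym i = M i := by
  have hq0 : (0:ℝ) < q := lt_trans one_pos hq
  rintro i hi1 hi2
  obtain ⟨n, rfl⟩ : ∃ n, i = n + 1 := ⟨i - 1, (Nat.succ_pred_eq_of_pos hi1).symm⟩
  rw [hY, hYm, hZ, hM]
  simp only [Nat.add_sub_cancel]
  push_cast
  -- product shift lemmas
  have hD1 : D - 1 + 1 = D := by omega
  have hshift : ∀ x : ℕ, e - ((n:ℝ) + 1) + 1 + (x:ℝ) = e - ((n:ℝ) + 1) + ((x:ℝ) + 1) := by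
    intro x; ring
  have hg0 : (0:ℝ) < 1 + q ^ (e - ((n:ℝ) + 1)) := by positivity
  have hgD : (0:ℝ) < 1 + q ^ (e - ((n:ℝ) + 1) + (D:ℝ)) := by positivity
  -- R3 : range (D-1) shifted product
  have R3 : (∏ x ∈ range (D-1), (1 + q ^ (e - ((n:ℝ)+1) + 1 + (x:ℝ))))
      = (∏ x ∈ range D, (1 + q ^ (e - ((n:ℝ)+1) + (x:ℝ)))) / (1 + q ^ (e - ((n:ℝ)+1))) := by
    rw [eq_div_iff hg0.ne']
    have h := Finset.prod_range_succ' (fun k : ℕ => 1 + q ^ (e - ((n:ℝ)+1) + (k:ℝ))) (D-1)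
    rw [hD1] at h
    rw [h]
    simp only [Nat.cast_zero, add_zero, Nat.cast_add, Nat.cast_one]
    congr 1
    exact Finset.prod_congr rfl (fun x _ => by rw [hshift x])
  -- R4 : range D shifted product
  have R4 : (∏ x ∈ range D, (1 + q ^ (e - ((n:ℝ)+1) + 1 + (x:ℝ))))
      = (∏ x ∈ range D, (1 + q ^ (e - ((n:ℝ)+1) + (x:ℝ)))) * (1 + q ^ (e - ((n:ℝ)+1) + (D:ℝ)))
        / (1 + q ^ (e - ((n:ℝ)+1))) := by
    rw [eq_div_iff hg0.ne']
    have h := Finset.prod_range_succ' (fun k : ℕ => 1 + q ^ (e - ((n:ℝ)+1) + (k:ℝ))) D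
    have h2 := Finset.prod_range_succ (fun k : ℕ => 1 + q ^ (e - ((n:ℝ)+1) + (k:ℝ))) D
    simp only [Nat.cast_zero, add_zero, Nat.cast_add, Nat.cast_one] at h h2
    have h3 : (∏ x ∈ range D, (1 + q ^ (e - ((n:ℝ)+1) + 1 + (x:ℝ))))
        = ∏ x ∈ range D, (1 + q ^ (e - ((n:ℝ)+1) + ((x:ℝ) + 1))) :=
      Finset.prod_congr rfl (fun x _ => by rw [hshift x])
    rw [h3, ← h, h2]
  -- R6 : range (D+1) product
  have R6 : (∏ x ∈ range (D+1), (1 + q ^ (e - ((n:ℝ)+1) + (x:ℝ))))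
      = (∏ x ∈ range D, (1 + q ^ (e - ((n:ℝ)+1) + (x:ℝ)))) * (1 + q ^ (e - ((n:ℝ)+1) + (D:ℝ))) := by
    exact Finset.prod_range_succ _ D
  -- R5 : the (q^{-D};q)_i product
  have R5 : (∏ k ∈ range (n+1), (1 - q ^ ((k:ℝ) - (D:ℝ))))
      = (∏ k ∈ range n, (1 - q ^ (1 - (D:ℝ) + (k:ℝ)))) * (1 - q ^ (0 - (D:ℝ))) := by
    have h := Finset.prod_range_succ' (fun k : ℕ => 1 - q ^ ((k:ℝ) - (D:ℝ))) n
    rw [h]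
    simp only [Nat.cast_zero, Nat.cast_add, Nat.cast_one]
    congr 1
    exact Finset.prod_congr rfl (fun x _ => by rw [show ((x:ℝ)+1) - (D:ℝ) = 1 - (D:ℝ) + (x:ℝ) by ring])
  -- R1, R2
  have R1 : (∏ k ∈ range (n+1), (1 - q ^ (1 - (D:ℝ) + (k:ℝ))))
      = (∏ k ∈ range n, (1 - q ^ (1 - (D:ℝ) + (k:ℝ)))) * (1 - q ^ (1 - (D:ℝ) + (n:ℝ))) :=
    Finset.prod_range_succ _ n
  have R2 : (∏ k ∈ range (n+1), (1 - q ^ (k + 1)))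
      = (∏ k ∈ range n, (1 - q ^ (k + 1))) * (1 - q ^ (n + 1)) :=
    Finset.prod_range_succ _ n
  rw [R1, R2, R3, R4, R5, R6]
  -- rpow atoms
  have E2 : q ^ (((n:ℝ)+1) * ((D:ℝ) + e - ((n:ℝ)+1) - 1) + (D:ℝ))
      = q ^ (((n:ℝ)+1) * ((D:ℝ) + e - ((n:ℝ)+1))) * q ^ (D:ℝ) / q ^ ((n:ℝ)+1) := by
    rw [← Real.rpow_add hq0, ← Real.rpow_sub hq0]; congr 1; ring
  have E3 : q ^ (((n:ℝ)+1) * ((D:ℝ) + e - ((n:ℝ)+1) - 2) + (D:ℝ) + e)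
      = q ^ (((n:ℝ)+1) * ((D:ℝ) + e - ((n:ℝ)+1))) * (q ^ (D:ℝ) * q ^ e)
        / (q ^ ((n:ℝ)+1) * q ^ ((n:ℝ)+1)) := by
    rw [← Real.rpow_add hq0, ← Real.rpow_add hq0, ← Real.rpow_add hq0, ← Real.rpow_sub hq0]
    congr 1; ring
  have E4 : q ^ (((n:ℝ)+1) * ((D:ℝ) + e - ((n:ℝ)+1) + 1))
      = q ^ (((n:ℝ)+1) * ((D:ℝ) + e - ((n:ℝ)+1))) * q ^ ((n:ℝ)+1) := by
    rw [← Real.rpow_add hq0]; congr 1; ring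
  have E5 : q ^ ((D:ℝ) + e - ((n:ℝ)+1)) = q ^ (D:ℝ) * q ^ e / q ^ ((n:ℝ)+1) := by
    rw [← Real.rpow_add hq0, ← Real.rpow_sub hq0]
  have E6 : q ^ ((D:ℝ) - ((n:ℝ)+1)) = q ^ (D:ℝ) / q ^ ((n:ℝ)+1) := by
    rw [← Real.rpow_sub hq0]
  have E7 : q ^ ((D:ℝ) + e - 2 * ((n:ℝ)+1))
      = q ^ (D:ℝ) * q ^ e / (q ^ ((n:ℝ)+1) * q ^ ((n:ℝ)+1)) := by
    rw [← Real.rpow_add hq0, ← Real.rpow_add hq0, ← Real.rpow_sub hq0]; congr 1; ring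
  have E8 : q ^ ((n:ℝ) + 1 - e) = q ^ ((n:ℝ)+1) / q ^ e := by
    rw [← Real.rpow_sub hq0]
  have E9 : q ^ (1 - (D:ℝ) + (n:ℝ)) = q ^ ((n:ℝ)+1) / q ^ (D:ℝ) := by
    rw [← Real.rpow_sub hq0]; congr 1; ring
  have E10 : q ^ (e - ((n:ℝ)+1)) = q ^ e / q ^ ((n:ℝ)+1) := by
    rw [← Real.rpow_sub hq0]
  have E11 : q ^ (e - ((n:ℝ)+1) + (D:ℝ)) = q ^ e / q ^ ((n:ℝ)+1) * q ^ (D:ℝ) := by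
    rw [← Real.rpow_sub hq0, ← Real.rpow_add hq0]
  have E12 : q ^ (n+1) = q ^ ((n:ℝ)+1) := by
    rw [← Real.rpow_natCast q (n+1)]; congr 1; push_cast; ring
  have E13 : q ^ (0 - (D:ℝ)) = 1 / q ^ (D:ℝ) := by
    rw [Real.rpow_sub hq0, Real.rpow_zero]
  rw [E2, E3, E4, E5, E6, E7, E8, E9, E10, E11, E12, E13]
  -- signs
  rw [pow_succ]
  -- atoms and positivity
  set a := q ^ ((n:ℝ)+1) with ha
  set b := q ^ (D:ℝ) with hb
  set c := q ^ e with hc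
  set P := q ^ (((n:ℝ)+1) * ((D:ℝ) + e - ((n:ℝ)+1))) with hP
  have ha0 : 0 < a := Real.rpow_pos_of_pos hq0 _
  have hb0 : 0 < b := Real.rpow_pos_of_pos hq0 _
  have hc0 : 0 < c := Real.rpow_pos_of_pos hq0 _
  have hP0 : 0 < P := Real.rpow_pos_of_pos hq0 _
  have ha1 : 1 < a := by
    rw [ha]
    exact Real.one_lt_rpow_iff_of_pos hq0 |>.mpr (Or.inl ⟨hq, by positivity⟩)
  have hA : (1:ℝ) - a ≠ 0 := sub_ne_zero_of_ne (ne_of_lt ha1)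
  have hB : (∏ k ∈ range n, (1 - q ^ (k + 1))) ≠ 0 := by
    rw [Finset.prod_ne_zero_iff]
    intro k _
    have h1 : (1:ℝ) < q ^ (k+1) := one_lt_pow₀ hq (Nat.succ_ne_zero k)
    exact sub_ne_zero_of_ne (ne_of_lt h1)
  have hC : (0:ℝ) < (∏ x ∈ range D, (1 + q ^ (e - ((n:ℝ)+1) + (x:ℝ)))) := by
    apply Finset.prod_pos
    intro k _
    positivity
  field_simp
  ring
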